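/- Let $f : \mathbb{R}^n \to \mathbb{R}$ be convex with $L_f$-Lipschitz gradient, $g$ proper lower semicontinuous convex, $\phi = f + g$, $t \in (0, 1/L_f]$, and $x^+ = \mathrm{prox}_{tg}(x - t\nabla f(x))$. Then for every $u \in \mathbb{R}^n$: $\phi(x^+) - \phi(u) \le \frac{1}{t}\langle x - x^+, x - u\rangle - \frac{1}{2t}\|x - x^+\|^2$. -/

import Mathlib

open Topology Filter Set

theorem dir_deriv' {n : ℕ} (f : EuclideanSpace ℝ (Fin n) → ℝ) (gf p v : EuclideanSpace ℝ (Fin n))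
    (s : ℝ) (h : HasGradientAt f gf (p + s • v)) :
    HasDerivAt (fun s : ℝ => f (p + s • v)) (inner ℝ gf v) s := by
  have hc : HasDerivAt (fun s : ℝ => p + s • v) v s := by
    simpa using ((hasDerivAt_id s).smul_const v).const_add p
  have := h.hasFDerivAt.comp_hasDerivAt s hc
  exact this

theorem conv_grad_ineq' {n : ℕ} (f : EuclideanSpace ℝ (Fin n) → ℝ)
    (gradf : EuclideanSpace ℝ (Fin n) → EuclideanSpace ℝ (Fin n))
    (hfconv : ConvexOn ℝ Set.univ f)
    (hgrad : ∀ x, HasGradientAt f (gradf x) x)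
    (a u : EuclideanSpace ℝ (Fin n)) :
    f a + inner ℝ (gradf a) (u - a) ≤ f u := by
  set v := u - a with hv
  have hd : HasDerivAt (fun s : ℝ => f (a + s • v)) (inner ℝ (gradf a) v) 0 := by
    have := dir_deriv' f (gradf (a + (0:ℝ) • v)) a v 0 (hgrad _)
    simpa using this
  have hslope : Filter.Tendsto (slope (fun s : ℝ => f (a + s • v)) 0) (𝓝[>] 0)
      (𝓝 (inner ℝ (gradf a) v)) := by
    exact (hasDerivAt_iff_tendsto_slope.1 hd).mono_left
      (nhdsWithin_mono 0 (fun s hs => ne_of_gt hs))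
  have hle : ∀ᶠ s in 𝓝[>] (0:ℝ), slope (fun s : ℝ => f (a + s • v)) 0 s ≤ f u - f a := by
    filter_upwards [Ioc_mem_nhdsGT_of_mem (by norm_num : (0:ℝ) ∈ Set.Ico (0:ℝ) 1)] with s hs
    obtain ⟨hs0, hs1⟩ := hs
    have hcomb := hfconv.2 (Set.mem_univ a) (Set.mem_univ u) (by linarith : (0:ℝ) ≤ 1 - s)
      (le_of_lt hs0) (by ring)
    have hpt : (1 - s) • a + s • u = a + s • v := by
      rw [hv]; module
    rw [hpt] at hcomb
    rw [slope_def_field]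
    simp only [smul_eq_mul] at hcomb
    have : f (a + s • v) - f (a + (0:ℝ) • v) ≤ s * (f u - f a) := by
      simp only [zero_smul, add_zero]
      nlinarith
    rw [sub_zero, div_le_iff₀ hs0]
    simpa [mul_comm] using this
  have := le_of_tendsto hslope hle
  linarith

theorem descent_lemma' {n : ℕ} (f : EuclideanSpace ℝ (Fin n) → ℝ)
    (gradf : EuclideanSpace ℝ (Fin n) → EuclideanSpace ℝ (Fin n))
    (Lf : ℝ)
    (hgrad : ∀ x, HasGradientAt f (gradf x) x)
    (hflip : ∀ x y, ‖gradf x - gradf y‖ ≤ Lf * ‖x - y‖)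
    (a y : EuclideanSpace ℝ (Fin n)) :
    f y ≤ f a + inner ℝ (gradf a) (y - a) + Lf / 2 * ‖y - a‖ ^ 2 := by
  set v := y - a with hv
  set h : ℝ → ℝ := fun s => f (a + s • v) - s * inner ℝ (gradf a) v - Lf * ‖v‖ ^ 2 * s ^ 2 / 2
    with hh
  have hder : ∀ s : ℝ, HasDerivAt h
      (inner ℝ (gradf (a + s • v)) v - inner ℝ (gradf a) v - Lf * ‖v‖ ^ 2 * s) s := by
    intro s
    have h1 := dir_deriv' f (gradf (a + s • v)) a v s (hgrad _)
    have h2 : HasDerivAt (fun s : ℝ => s * inner ℝ (gradf a) v) (inner ℝ (gradf a) v) s := by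
      simpa using (hasDerivAt_id s).mul_const (inner ℝ (gradf a) v : ℝ)
    have h3 : HasDerivAt (fun s : ℝ => Lf * ‖v‖ ^ 2 * s ^ 2 / 2) (Lf * ‖v‖ ^ 2 * s) s := by
      have := ((hasDerivAt_pow 2 s).const_mul (Lf * ‖v‖ ^ 2)).div_const 2
      exact this.congr_deriv (by ring)
    exact (h1.sub h2).sub h3
  have hanti : AntitoneOn h (Icc (0:ℝ) 1) := by
    apply antitoneOn_of_deriv_nonpos (convex_Icc 0 1)
    · exact fun s _ => ((hder s).continuousAt).continuousWithinAt
    · exact fun s _ => ((hder s).differentiableAt).differentiableWithinAt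
    · intro s hs
      rw [interior_Icc] at hs
      rw [(hder s).deriv]
      have hb : inner ℝ (gradf (a + s • v)) v - inner ℝ (gradf a) v
          ≤ Lf * ‖v‖ ^ 2 * s := by
        have h4 : (inner ℝ (gradf (a + s • v)) v : ℝ) - inner ℝ (gradf a) v
            = inner ℝ (gradf (a + s • v) - gradf a) v := by
          rw [inner_sub_left]
        rw [h4]
        calc (inner ℝ (gradf (a + s • v) - gradf a) v : ℝ)
            ≤ ‖gradf (a + s • v) - gradf a‖ * ‖v‖ := real_inner_le_norm _ _
          _ ≤ Lf * ‖a + s • v - a‖ * ‖v‖ := by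
              have := hflip (a + s • v) a
              exact mul_le_mul_of_nonneg_right this (norm_nonneg v)
          _ = Lf * ‖v‖ ^ 2 * s := by
              simp [norm_smul, abs_of_pos hs.1]
              ring
      linarith
  have := hanti (by constructor <;> norm_num) (by constructor <;> norm_num) (by norm_num : (0:ℝ) ≤ 1)
  simp only [hh] at this
  simp only [zero_smul, add_zero, one_smul, zero_mul, mul_zero, sub_zero, zero_pow,
    one_mul, one_pow, mul_one] at this
  have hyv : a + v = y := by rw [hv]; abel
  rw [hyv] at this
  linarith

set_option maxHeartbeats 1000000 in
theorem stmt_12 (n : ℕ) (f : EuclideanSpace ℝ (Fin n) → ℝ)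
    (gradf : EuclideanSpace ℝ (Fin n) → EuclideanSpace ℝ (Fin n))
    (g : EuclideanSpace ℝ (Fin n) → EReal)
    (Lf t : ℝ) (hLf : 0 < Lf)
    (hfconv : ConvexOn ℝ Set.univ f)
    (hgrad : ∀ x, HasGradientAt f (gradf x) x)
    (hflip : ∀ x y, ‖gradf x - gradf y‖ ≤ Lf * ‖x - y‖)
    (hgproper : (∀ x, g x ≠ ⊥) ∧ ∃ x, g x ≠ ⊤)
    (hglsc : LowerSemicontinuous g)
    (hgconv : ∀ x y, ∀ a b : ℝ, 0 ≤ a → 0 ≤ b → a + b = 1 →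
      g (a • x + b • y) ≤ (a : EReal) * g x + (b : EReal) * g y)
    (ht : t ∈ Set.Ioc (0 : ℝ) (1 / Lf))
    (x xp : EuclideanSpace ℝ (Fin n))
    -- xp = prox_{tg}(x - t∇f(x)):
    (hxp : ∀ u, (t : EReal) * g xp + ((‖xp - (x - t • gradf x)‖ ^ 2 / 2 : ℝ) : EReal)
      ≤ (t : EReal) * g u + ((‖u - (x - t • gradf x)‖ ^ 2 / 2 : ℝ) : EReal)) :
    ∀ u, (f xp : EReal) + g xp ≤ ((f u : EReal) + g u) +
      (((1 / t) * inner ℝ (x - xp) (x - u) - 1 / (2 * t) * ‖x - xp‖ ^ 2 : ℝ) : EReal) := by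
  have ht0 : 0 < t := ht.1
  have htne : t ≠ 0 := ht0.ne'
  -- g xp is a real number
  have hgxp_ne_top : g xp ≠ ⊤ := by
    intro htop
    obtain ⟨x0, hx0⟩ := hgproper.2
    have h := hxp x0
    rw [htop, EReal.coe_mul_top_of_pos ht0, EReal.top_add_coe] at h
    have hx0r : g x0 = ((g x0).toReal : EReal) := (EReal.coe_toReal hx0 (hgproper.1 x0)).symm
    rw [hx0r] at h
    rw [top_le_iff] at h
    have : ((t * (g x0).toReal + ‖x0 - (x - t • gradf x)‖ ^ 2 / 2 : ℝ) : EReal) = ⊤ := by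
      rw [← h]; push_cast; ring
    exact EReal.coe_ne_top _ this
  set b := (g xp).toReal with hb
  have hgb : g xp = (b : EReal) := (EReal.coe_toReal hgxp_ne_top (hgproper.1 xp)).symm
  intro u
  rcases eq_or_ne (g u) ⊤ with hgu | hgu
  · rw [hgu]
    rw [EReal.coe_add_top, EReal.top_add_coe]
    exact le_top
  set c := (g u).toReal with hc
  have hgc : g u = (c : EReal) := (EReal.coe_toReal hgu (hgproper.1 u)).symm
  -- notation
  set y := x - t • gradf x with hy
  set I : ℝ := inner ℝ (xp - y) (u - xp) with hI
  set Nu : ℝ := ‖u - xp‖ ^ 2 with hNu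
  have hNu0 : (0:ℝ) ≤ Nu := by rw [hNu]; positivity
  -- prox inequality for each l ∈ (0,1]
  have hC0 : ∀ l : ℝ, 0 < l → l ≤ 1 → t * b ≤ t * c + I + l / 2 * Nu := by
    intro l hl0 hl1
    set ul := xp + l • (u - xp) with hul
    have hcomb := hgconv xp u (1 - l) l (by linarith) hl0.le (by ring)
    have hpt : (1 - l) • xp + l • u = ul := by rw [hul]; module
    rw [hpt, hgb, hgc] at hcomb
    have h1 : ((1 - l : ℝ) : EReal) * (b : EReal) + (l : EReal) * (c : EReal)
        = (((1 - l) * b + l * c : ℝ) : EReal) := by norm_cast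
    rw [h1] at hcomb
    have hne_top : g ul ≠ ⊤ := ne_top_of_le_ne_top (EReal.coe_ne_top _) hcomb
    set d := (g ul).toReal with hd'
    have hgd : g ul = (d : EReal) := (EReal.coe_toReal hne_top (hgproper.1 ul)).symm
    have hd : d ≤ (1 - l) * b + l * c := by
      rw [hgd] at hcomb; exact_mod_cast hcomb
    have hx := hxp ul
    rw [hgb, hgd] at hx
    have hx' : t * b + ‖xp - y‖ ^ 2 / 2 ≤ t * d + ‖ul - y‖ ^ 2 / 2 := by
      have : ((t * b + ‖xp - y‖ ^ 2 / 2 : ℝ) : EReal)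
          ≤ ((t * d + ‖ul - y‖ ^ 2 / 2 : ℝ) : EReal) := by
        push_cast
        exact hx
      exact_mod_cast this
    have huly : ul - y = (xp - y) + l • (u - xp) := by rw [hul]; abel
    have hexp : ‖ul - y‖ ^ 2 = ‖xp - y‖ ^ 2 + 2 * (l * I) + l ^ 2 * Nu := by
      rw [huly, norm_add_sq_real, real_inner_smul_right, norm_smul, hNu, hI]
      simp [mul_pow, sq_abs]
    have hdmul := mul_le_mul_of_nonneg_left hd ht0.le
    have hlin : l * (t * b) ≤ l * (t * c + I + l / 2 * Nu) := by nlinarith [hx', hdmul, hexp]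
    exact le_of_mul_le_mul_left hlin hl0
  -- ε-argument to remove l
  have hC : t * b ≤ t * c + I := by
    apply le_of_forall_pos_le_add
    intro ε hε
    set l := min 1 (2 * ε / (Nu + 1)) with hl
    have hl0 : 0 < l := by
      apply lt_min one_pos
      positivity
    have hl1 : l ≤ 1 := min_le_left _ _
    have key := hC0 l hl0 hl1
    have hbound : l / 2 * Nu ≤ ε := by
      have h1 : l ≤ 2 * ε / (Nu + 1) := min_le_right _ _
      have h2 : l / 2 * Nu ≤ (2 * ε / (Nu + 1)) / 2 * Nu := by
        apply mul_le_mul_of_nonneg_right _ hNu0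
        linarith
      have h3 : (2 * ε / (Nu + 1)) / 2 * Nu ≤ ε := by
        rw [div_div, div_mul_eq_mul_div, div_le_iff₀ (by positivity : (0:ℝ) < (Nu + 1) * 2)]
        nlinarith
      linarith
    linarith
  -- relate I to the goal's inner products
  have hIeq : I = -(inner ℝ (x - xp) (u - xp) : ℝ) + t * inner ℝ (gradf x) (u - xp) := by
    rw [hI, hy, show xp - (x - t • gradf x) = -(x - xp) + t • gradf x from by module,
      inner_add_left, inner_neg_left, real_inner_smul_left]
  -- gradient inequalities
  have hA := descent_lemma' f gradf Lf hgrad hflip x xp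
  have hB := conv_grad_ineq' f gradf hfconv hgrad x u
  -- inner product identities
  have hK : (inner ℝ (gradf x) (u - xp) : ℝ)
      = inner ℝ (gradf x) (u - x) - inner ℝ (gradf x) (xp - x) := by
    rw [← inner_sub_right]; congr 1; abel
  have hQ : (inner ℝ (x - xp) (x - u) : ℝ) = ‖x - xp‖ ^ 2 - inner ℝ (x - xp) (u - xp) := by
    rw [← real_inner_self_eq_norm_sq, ← inner_sub_right]; congr 1; abel
  have hLfr : Lf * t ≤ 1 := by
    have := ht.2
    rw [le_div_iff₀ hLf] at this
    linarith
  -- final real inequality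
  have hreal : f xp + b ≤ f u + c + (1 / t * inner ℝ (x - xp) (x - u)
      - 1 / (2 * t) * ‖x - xp‖ ^ 2) := by
    set P : ℝ := inner ℝ (x - xp) (u - xp) with hP
    set N : ℝ := ‖x - xp‖ ^ 2 with hN
    have hN0 : (0:ℝ) ≤ N := by rw [hN]; positivity
    have hnorm : ‖xp - x‖ ^ 2 = N := by rw [hN, ← neg_sub, norm_neg]
    rw [hnorm] at hA
    -- from hC: t*b ≤ t*c - P + t*K
    have hC' : t * b ≤ t * c - P + t * (inner ℝ (gradf x) (u - xp) : ℝ) := by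
      rw [hIeq] at hC; linarith
    -- divide by t
    have hr : 1 / t * t = 1 := by field_simp
    have hb' : b ≤ c - 1 / t * P + (inner ℝ (gradf x) (u - xp) : ℝ) := by
      have h := mul_le_mul_of_nonneg_left hC' (by positivity : (0:ℝ) ≤ 1 / t)
      have e1 : 1 / t * (t * b) = b := by field_simp
      have e2 : 1 / t * (t * c - P + t * (inner ℝ (gradf x) (u - xp) : ℝ))
          = c - 1 / t * P + (inner ℝ (gradf x) (u - xp) : ℝ) := by field_simp
      rw [e1, e2] at h
      exact h
    have hqe : 1 / t * (inner ℝ (x - xp) (x - u) : ℝ) = 1 / t * N - 1 / t * P := by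
      rw [hQ]; ring
    have h2t : 1 / (2 * t) * N = 1 / 2 * (1 / t * N) := by
      field_simp
    have hLfN : Lf / 2 * N ≤ 1 / (2 * t) * N := by
      apply mul_le_mul_of_nonneg_right _ hN0
      rw [div_le_div_iff₀ (by norm_num) (by positivity)]
      nlinarith
    rw [hK] at hb'
    linarith [hA, hB, hb']
  -- lift to EReal
  rw [hgb, hgc]
  have : ((f xp + b : ℝ) : EReal) ≤ ((f u + c + (1 / t * inner ℝ (x - xp) (x - u)
      - 1 / (2 * t) * ‖x - xp‖ ^ 2) : ℝ) : EReal) := EReal.coe_le_coe_iff.2 hreal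
  push_cast at this ⊢
  convert this using 2
  try push_cast
  try ring
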